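/- Monomorphisation is sound for a simplified polymorphic expression language: if the monomorphised program evaluates, then the polymorphic program evaluates to the corresponding value. Precisely: for an injective renaming rename from (polymorphic function name, type-argument list) pairs to monomorphic function names, and definition environments D_poly and D_mono with D_mono(rename(f, τs)) being the monomorphisation of D_poly(f) instantiated at τs, if (x ↦ monoval(rename, v)) ⊢ monoexpr(rename, e) ⇓ monoval(rename, v') under D_mono, then (x ↦ v) ⊢ e ⇓ v' under D_poly. -/

import Mathlib

/-- Type arguments are drawn from an abstract type `T`; function names are
    strings. -/
inductive Expr (T : Type)
  | var (n : ℕ)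
  | fn (f : String) (τs : List T)
  | app (e₁ e₂ : Expr T)
  | letE (e₁ e₂ : Expr T)
  | lit (n : ℕ)

/-- Values: literals and function values ⟨x. e⟩ (closures over top-level
    expressions only, de Bruijn). -/
inductive Val (T : Type)
  | lit (n : ℕ)
  | clos (e : Expr T)

/-- Definition environments: a function name applied to type arguments yields
    the (instantiated) body, if defined. -/
abbrev Defs (T : Type) := String → List T → Option (Expr T)

/-- Big-step semantics, parameterised by the definition environment. -/
inductive Eval {T : Type} (D : Defs T) : List (Val T) → Expr T → Val T → Prop
  | var : V[n]? = some v → Eval D V (.var n) v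
  | lit : Eval D V (.lit n) (.lit n)
  | fn : D f τs = some e → Eval D V (.fn f τs) (.clos e)
  | app : Eval D V e₁ (.clos e) → Eval D V e₂ v' → Eval D [v'] e v →
      Eval D V (.app e₁ e₂) v
  | letE : Eval D V e₁ v₁ → Eval D (v₁ :: V) e₂ v → Eval D V (.letE e₁ e₂) v

/-- Monomorphise an expression: replace every function reference `f[τs]` by
    the monomorphic name `rename (f, τs)` with empty type arguments. -/
def monoexpr {T : Type} (rename : String × List T → String) : Expr T → Expr T
  | .var n => .var n
  | .fn f τs => .fn (rename (f, τs)) []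
  | .app e₁ e₂ => .app (monoexpr rename e₁) (monoexpr rename e₂)
  | .letE e₁ e₂ => .letE (monoexpr rename e₁) (monoexpr rename e₂)
  | .lit n => .lit n

/-- Monomorphise a value. -/
def monoval {T : Type} (rename : String × List T → String) : Val T → Val T
  | .lit n => .lit n
  | .clos e => .clos (monoexpr rename e)

theorem monoexpr_inj {T : Type} {rename : String × List T → String}
    (hinj : Function.Injective rename) :
    ∀ {e₁ e₂ : Expr T}, monoexpr rename e₁ = monoexpr rename e₂ → e₁ = e₂ := by
  intro e₁
  induction e₁ with
  | var n => intro e₂ h; cases e₂ <;> simp_all [monoexpr]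
  | lit n => intro e₂ h; cases e₂ <;> simp_all [monoexpr]
  | fn f τs =>
    intro e₂ h; cases e₂ <;> simp_all [monoexpr]
    have := hinj h
    simpa using this
  | app a b iha ihb =>
    intro e₂ h
    cases e₂ with
    | app c d =>
      simp only [monoexpr, Expr.app.injEq] at h
      rw [iha h.1, ihb h.2]
    | _ => simp [monoexpr] at h
  | letE a b iha ihb =>
    intro e₂ h
    cases e₂ with
    | letE c d =>
      simp only [monoexpr, Expr.letE.injEq] at h
      rw [iha h.1, ihb h.2]
    | _ => simp [monoexpr] at h

theorem monoval_inj {T : Type} {rename : String × List T → String}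
    (hinj : Function.Injective rename) :
    ∀ {v₁ v₂ : Val T}, monoval rename v₁ = monoval rename v₂ → v₁ = v₂ := by
  intro v₁ v₂ h
  cases v₁ <;> cases v₂ <;> simp_all [monoval]
  exact monoexpr_inj hinj h

theorem mono_main {T : Type} {rename : String × List T → String}
    {Dpoly Dmono : Defs T}
    (hinj : Function.Injective rename)
    (hdom : ∀ g τs' e', Dmono g τs' = some e' →
      ∃ f τs e, g = rename (f, τs) ∧ τs' = [] ∧ Dpoly f τs = some e ∧
        e' = monoexpr rename e)
    {V' : List (Val T)} {E' : Expr T} {w : Val T}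
    (h : Eval Dmono V' E' w) :
    ∀ V e, V' = V.map (monoval rename) → E' = monoexpr rename e →
      ∃ v', w = monoval rename v' ∧ Eval Dpoly V e v' := by
  induction h with
  | @var V₀ n v₀ hget =>
    intro V e hV hE
    cases e <;> simp [monoexpr] at hE
    subst hE hV
    simp [List.getElem?_map] at hget
    obtain ⟨v', hv', hm⟩ := hget
    exact ⟨v', hm.symm, .var hv'⟩
  | @lit V₀ n =>
    intro V e hV hE
    cases e <;> simp [monoexpr] at hE
    subst hE
    exact ⟨.lit _, rfl, .lit⟩
  | @fn V₀ g τs' eb hD =>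
    intro V e hV hE
    cases e <;> simp [monoexpr] at hE
    obtain ⟨hg, hτ⟩ := hE
    subst hg hτ
    rename_i f τs
    obtain ⟨f', τs'', e0, hg, -, hDp, heb⟩ := hdom _ _ _ hD
    obtain ⟨hf, hτs⟩ : f' = f ∧ τs'' = τs := by
      have := hinj hg.symm
      simpa using this
    subst hf hτs heb
    exact ⟨.clos e0, rfl, .fn hDp⟩
  | @app V₀ e₁' e₂' eb v₂ w h₁ h₂ h₃ ih₁ ih₂ ih₃ =>
    intro V e hV hE
    cases e <;> simp [monoexpr] at hE
    obtain ⟨h₁e, h₂e⟩ := hE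
    rename_i a b
    obtain ⟨c₁, hc₁, hev₁⟩ := ih₁ V a hV h₁e
    obtain ⟨c₂, hc₂, hev₂⟩ := ih₂ V b hV h₂e
    cases c₁ with
    | lit n => simp [monoval] at hc₁
    | clos e0 =>
      simp [monoval] at hc₁
      obtain ⟨w', hw', hev₃⟩ := ih₃ [c₂] e0 (by simp [hc₂]) hc₁
      exact ⟨w', hw', .app hev₁ hev₂ hev₃⟩
  | @letE V₀ e₁' v₁ e₂' w h₁ h₂ ih₁ ih₂ =>
    intro V e hV hE
    cases e <;> simp [monoexpr] at hE
    obtain ⟨h₁e, h₂e⟩ := hE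
    rename_i a b
    obtain ⟨c₁, hc₁, hev₁⟩ := ih₁ V a hV h₁e
    obtain ⟨w', hw', hev₂⟩ := ih₂ (c₁ :: V) b (by simp [hV, hc₁]) h₂e
    exact ⟨w', hw', .letE hev₁ hev₂⟩

/-- Monomorphisation is sound: if the monomorphised program evaluates under the
    monomorphic definitions, then the polymorphic program evaluates to the
    corresponding value under the polymorphic definitions. -/
theorem monomorphisation {T : Type} (rename : String × List T → String)
    (Dpoly Dmono : Defs T)
    (hinj : Function.Injective rename)
    (hdefs : ∀ f τs e, Dpoly f τs = some e →
      Dmono (rename (f, τs)) [] = some (monoexpr rename e))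
    (hdom : ∀ g τs' e', Dmono g τs' = some e' →
      ∃ f τs e, g = rename (f, τs) ∧ τs' = [] ∧ Dpoly f τs = some e ∧
        e' = monoexpr rename e)
    (e : Expr T) (v v' : Val T)
    (h : Eval Dmono [monoval rename v] (monoexpr rename e) (monoval rename v')) :
    Eval Dpoly [v] e v' := by
  obtain ⟨v'', hv'', hev⟩ := mono_main hinj hdom h [v] e (by simp) rfl
  rwa [monoval_inj hinj hv'']
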